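/- Let p be an odd prime and let τ = (1 2 … p) be a p-cycle in the alternating group A_p. Then the number of Sylow p-subgroups of A_p equals (p-2)!. -/

import Mathlib

open Equiv Equiv.Perm Subgroup MulAction

private lemma commute_iff_mem_zpowers' {α : Type*} [Fintype α] [DecidableEq α]
    {c : Perm α} (hc : c.IsCycle) (hsupp : c.support = Finset.univ) (g : Perm α) :
    Commute g c ↔ g ∈ Subgroup.zpowers c := by
  rw [hc.commute_iff]
  constructor
  · rintro ⟨hc', hg⟩
    rwa [ofSubtype_subtypePerm _ (fun x _ => by simp [hsupp])] at hg
  · intro hg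
    refine ⟨fun x => by simp [hsupp], ?_⟩
    rwa [ofSubtype_subtypePerm _ (fun x _ => by simp [hsupp])]

private lemma order_p_cycle' {p : ℕ} (hp : p.Prime) {σ : Perm (Fin p)}
    (hσ : orderOf σ = p) : σ.IsCycle ∧ σ.support = Finset.univ := by
  have hc : σ.IsCycle := by
    apply isCycle_of_prime_order' (by rw [hσ]; exact hp)
    rw [hσ, Fintype.card_fin]
    have := hp.pos; omega
  have hcard : σ.support.card = p := by rw [← hc.orderOf, hσ]
  exact ⟨hc, Finset.eq_univ_of_card _ (by rw [hcard, Fintype.card_fin])⟩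

private lemma card_order_p_perm {p : ℕ} (hp : p.Prime) :
    Nat.card {σ : Perm (Fin p) // orderOf σ = p} = Nat.factorial (p - 1) := by
  classical
  haveI := Fact.mk hp
  have hdvd : p ∣ Fintype.card (Perm (Fin p)) := by
    rw [Fintype.card_perm, Fintype.card_fin]
    exact Nat.dvd_factorial hp.pos le_rfl
  obtain ⟨σ₀, hσ₀⟩ := exists_prime_orderOf_dvd_card (G := Perm (Fin p)) p hdvd
  obtain ⟨hc₀, hs₀⟩ := order_p_cycle' hp hσ₀
  -- the set of order-p elements is the conjugacy class of σ₀
  have hset : {σ : Perm (Fin p) | orderOf σ = p} = orbit (ConjAct (Perm (Fin p))) σ₀ := by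
    ext σ
    simp only [Set.mem_setOf_eq, ConjAct.mem_orbit_conjAct]
    constructor
    · intro hσ
      obtain ⟨hc, hs⟩ := order_p_cycle' hp hσ
      exact hc.isConj hc₀ (by rw [hs, hs₀])
    · intro h
      obtain ⟨u, hu⟩ := isConj_iff.mp h
      have he : orderOf (u * σ * u⁻¹) = orderOf σ := by
        have := orderOf_injective (MulAut.conj u).toMonoidHom (MulEquiv.injective _) σ
        simpa using this
      rw [← he, hu]
      exact hσ₀
  -- stabilizer is zpowers
  have hstab : stabilizer (ConjAct (Perm (Fin p))) σ₀
      = Subgroup.zpowers (ConjAct.toConjAct σ₀) := by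
    ext g
    rw [mem_stabilizer_iff, ConjAct.smul_def, Subgroup.mem_zpowers_iff]
    constructor
    · intro h
      have hcom : Commute (ConjAct.ofConjAct g) σ₀ := mul_inv_eq_iff_eq_mul.mp h
      rw [commute_iff_mem_zpowers' hc₀ hs₀, Subgroup.mem_zpowers_iff] at hcom
      obtain ⟨k, hk⟩ := hcom
      exact ⟨k, by rw [← map_zpow, hk]; simp⟩
    · rintro ⟨k, rfl⟩
      rw [← map_zpow, ConjAct.ofConjAct_toConjAct, mul_inv_eq_iff_eq_mul]
      exact (Commute.refl σ₀).zpow_left k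
  have hcards : Nat.card (orbit (ConjAct (Perm (Fin p))) σ₀) * p
      = Nat.factorial p := by
    have := MulAction.card_orbit_mul_card_stabilizer_eq_card_group
      (ConjAct (Perm (Fin p))) σ₀
    rw [← Nat.card_eq_fintype_card, ← Nat.card_eq_fintype_card,
      ← Nat.card_eq_fintype_card] at this
    have hG : Nat.card (ConjAct (Perm (Fin p))) = p.factorial := by
      rw [Nat.card_eq_fintype_card, ConjAct.card, Fintype.card_perm, Fintype.card_fin]
    rw [← hG, ← this, hstab, Nat.card_zpowers]
    have hord : orderOf (ConjAct.toConjAct σ₀) = p := by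
      have := orderOf_injective (ConjAct.toConjAct (G := Perm (Fin p))).toMonoidHom
        (MulEquiv.injective _) σ₀
      simp only [MulEquiv.coe_toMonoidHom] at this
      rw [this, hσ₀]
    rw [hord]
  have horb : Nat.card {σ : Perm (Fin p) // orderOf σ = p}
      = Nat.card (orbit (ConjAct (Perm (Fin p))) σ₀) := by
    exact Nat.card_congr (Equiv.setCongr hset)
  rw [horb]
  have := Nat.mul_factorial_pred hp.ne_zero
  have hppos := hp.pos
  nlinarith [hcards]

private lemma order_p_mem_alternating {p : ℕ} (hp : p.Prime) (hodd : Odd p)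
    {σ : Perm (Fin p)} (hσ : orderOf σ = p) : σ ∈ alternatingGroup (Fin p) := by
  obtain ⟨hc, hsupp⟩ := order_p_cycle' hp hσ
  rw [Equiv.Perm.mem_alternatingGroup, hc.sign, ← hc.orderOf, hσ, hodd.neg_one_pow]
  simp

private lemma factorization_ap {p : ℕ} (hp : p.Prime) (hodd : Odd p) :
    (Nat.card (alternatingGroup (Fin p))).factorization p = 1 := by
  have hp2 : p ≠ 2 := by rintro rfl; exact absurd hodd (by decide)
  have hp3 : 3 ≤ p := by have := hp.two_le; omega
  haveI : Nontrivial (Fin p) := ⟨⟨⟨0, by omega⟩, ⟨1, by omega⟩, by simp [Fin.ext_iff]⟩⟩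
  have h2 : 2 * Nat.card (alternatingGroup (Fin p)) = Nat.factorial p := by
    rw [Nat.card_eq_fintype_card, two_mul_card_alternatingGroup, Fintype.card_perm,
      Fintype.card_fin]
  -- factorization of p! at p is 1
  have hfac : (Nat.factorial p).factorization p = 1 := by
    have h1 : p ∣ Nat.factorial p := Nat.dvd_factorial hp.pos le_rfl
    have hne : Nat.factorial p ≠ 0 := Nat.factorial_ne_zero p
    have h2' : ¬ p ^ 2 ∣ Nat.factorial p := by
      intro hdvd
      have : p * p ∣ p * Nat.factorial (p - 1) := by
        rw [Nat.mul_factorial_pred hp.ne_zero, ← sq]; exact hdvd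
      have hdvd' : p ∣ Nat.factorial (p - 1) := (Nat.mul_dvd_mul_iff_left hp.pos).mp this
      have := (Nat.Prime.dvd_factorial hp).mp hdvd'
      omega
    have hle : 1 ≤ (Nat.factorial p).factorization p := by
      rw [← hp.pow_dvd_iff_le_factorization hne, pow_one]; exact h1
    have hlt : ¬ 2 ≤ (Nat.factorial p).factorization p := by
      rw [← hp.pow_dvd_iff_le_factorization hne]; exact h2'
    omega
  have hne : Nat.card (alternatingGroup (Fin p)) ≠ 0 := Nat.card_pos.ne'
  have := congrArg (fun n => n.factorization p) h2
  try simp only at this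
  rw [Nat.factorization_mul (by norm_num) hne, hfac] at this
  have h2f : (Nat.factorization 2) p = 0 :=
    Nat.factorization_eq_zero_of_not_dvd (fun hd => by
      have := Nat.le_of_dvd (by norm_num) hd; omega)
  rw [Finsupp.add_apply, h2f, zero_add] at this
  exact this

/-- For an odd prime `p`, the number of Sylow `p`-subgroups of the
alternating group `A_p` equals `(p-2)!`. -/
theorem sylow_card_alternatingGroup (p : ℕ) (hp : p.Prime) (hodd : Odd p) :
    Nat.card (Sylow p (alternatingGroup (Fin p))) = Nat.factorial (p - 2) := by
  classical
  haveI := Fact.mk hp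
  have hp3 : 3 ≤ p := by
    have := hp.two_le
    rcases Nat.lt_or_ge p 3 with h | h
    · interval_cases p
      · exact absurd hodd (by decide)
    · exact h
  set G := alternatingGroup (Fin p) with hG
  have hfact : (Nat.card G).factorization p = 1 := factorization_ap hp hodd
  have hgsub : ∀ g : G, orderOf (g : Perm (Fin p)) = orderOf g :=
    fun g => orderOf_injective G.subtype G.subtype_injective g
  have e1 : {g : G // orderOf g = p} ≃ {σ : Perm (Fin p) // orderOf σ = p} :=
  { toFun := fun g => ⟨g.1.1, by rw [hgsub]; exact g.2⟩
    invFun := fun σ => ⟨⟨σ.1, order_p_mem_alternating hp hodd σ.2⟩, by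
      rw [← hgsub ⟨σ.1, order_p_mem_alternating hp hodd σ.2⟩]; exact σ.2⟩
    left_inv := fun g => by ext; rfl
    right_inv := fun σ => rfl }
  have hcount : Nat.card {g : G // orderOf g = p} = Nat.factorial (p - 1) := by
    rw [Nat.card_congr e1, card_order_p_perm hp]
  -- Sylow subgroups have cardinality p
  have hsylcard : ∀ P : Sylow p G, Nat.card P = p := fun P => by
    rw [P.card_eq_multiplicity, hfact, pow_one]
  -- the fibration
  have hzp : ∀ g : {g : G // orderOf g = p},
      Nat.card (Subgroup.zpowers g.1) = p ^ (Nat.card G).factorization p := fun g => by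
    rw [Nat.card_zpowers, hfact, pow_one]; exact g.2
  let f : {g : G // orderOf g = p} → Sylow p G := fun g => Sylow.ofCard _ (hzp g)
  have hfP : ∀ x : {g : G // orderOf g = p}, ((f x : Subgroup G)) = Subgroup.zpowers x.1 :=
    fun x => Sylow.coe_ofCard _ _
  -- each fiber has cardinality p - 1
  have hfiber : ∀ P : Sylow p G, Nat.card {x : {g : G // orderOf g = p} // f x = P} = p - 1 := by
    intro P
    have hmemP : ∀ x : {g : G // orderOf g = p}, f x = P → (x.1 : G) ∈ (P : Subgroup G) := by
      intro x hx
      rw [← hx, hfP]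
      exact Subgroup.mem_zpowers _
    have hordP : ∀ h : (P : Subgroup G), (h : G) ≠ 1 → orderOf (h : G) = p := by
      intro h hne
      have hdvd : orderOf (h : G) ∣ p := by
        have h1 := orderOf_dvd_natCard h
        rw [← orderOf_injective (P : Subgroup G).subtype
          (P : Subgroup G).subtype_injective h, hsylcard P] at h1
        exact h1
      rcases (Nat.Prime.eq_one_or_self_of_dvd hp _ hdvd) with h1 | h1
      · exact absurd (orderOf_eq_one_iff.mp h1) hne
      · exact h1
    have hback : ∀ h : (P : Subgroup G), (h : G) ≠ 1 →
        ∀ hy : orderOf ((h : G)) = p, f ⟨(h : G), hy⟩ = P := by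
      intro h hne hy
      apply Sylow.ext
      rw [hfP]
      apply Subgroup.eq_of_le_of_card_ge
      · exact Subgroup.zpowers_le.mpr h.2
      · rw [Nat.card_zpowers, hy, hsylcard P]
    have e2 : {x : {g : G // orderOf g = p} // f x = P} ≃ {h : (P : Subgroup G) // h ≠ 1} :=
    { toFun := fun x => ⟨⟨x.1.1, hmemP x.1 x.2⟩, by
        intro hcon
        have hx1 : (x.1.1 : G) = 1 := congrArg Subtype.val hcon
        have hx2 := x.1.2
        rw [hx1, orderOf_one] at hx2
        have := hp.two_le
        omega⟩
      invFun := fun h => ⟨⟨(h.1 : G), hordP h.1 (fun hc => h.2 (Subtype.ext hc))⟩,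
        hback h.1 (fun hc => h.2 (Subtype.ext hc)) _⟩
      left_inv := fun x => by ext; rfl
      right_inv := fun h => by ext; rfl }
    rw [Nat.card_congr e2, Nat.card_eq_fintype_card]
    have hcompl : Fintype.card {h : (P : Subgroup G) // ¬ h = 1}
        = Fintype.card (P : Subgroup G) - Fintype.card {h : (P : Subgroup G) // h = 1} :=
      Fintype.card_subtype_compl _
    rw [Fintype.card_subtype_eq] at hcompl
    calc Fintype.card {h : (P : Subgroup G) // h ≠ 1}
        = Fintype.card (P : Subgroup G) - 1 := hcompl
      _ = p - 1 := by rw [← Nat.card_eq_fintype_card, hsylcard P]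
  -- sum over fibers
  have hsum : Nat.card {g : G // orderOf g = p} = Nat.card (Sylow p G) * (p - 1) := by
    rw [Nat.card_congr (Equiv.sigmaFiberEquiv f).symm, Nat.card_eq_fintype_card,
      Fintype.card_sigma]
    have hstep : ∀ P : Sylow p G, Fintype.card {x : {g : G // orderOf g = p} // f x = P}
        = p - 1 := fun P => by rw [← Nat.card_eq_fintype_card, hfiber P]
    calc (∑ P : Sylow p G, Fintype.card {x : {g : G // orderOf g = p} // f x = P})
        = ∑ _P : Sylow p G, (p - 1) := Finset.sum_congr rfl (fun P _ => hstep P)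
      _ = Nat.card (Sylow p G) * (p - 1) := by
          rw [Finset.sum_const, smul_eq_mul, Finset.card_univ, Nat.card_eq_fintype_card]
  -- conclude
  rw [hcount] at hsum
  have hfac2 : Nat.factorial (p - 1) = (p - 1) * Nat.factorial (p - 2) := by
    have h21 : p - 1 - 1 = p - 2 := by omega
    rw [← Nat.mul_factorial_pred (n := p - 1) (by omega), h21]
  rw [hfac2] at hsum
  have hpos : 0 < p - 1 := by omega
  have hsum' := hsum.symm
  rw [mul_comm (Nat.card (Sylow p G)) (p - 1)] at hsum'
  exact Nat.eq_of_mul_eq_mul_left hpos hsum'
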